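/- Let A, B be n×n positive definite complex matrices and τ, ν ∈ (0,1) with ν ≤ min{τ,1-τ} or ν ≥ max{τ,1-τ}. Then (A + B A^{-1} B - (A#_{2τ}B + A#_{2-2τ}B))/(τ(1-τ)) ≤ (A + B A^{-1} B - (A#_{2ν}B + A#_{2-2ν}B))/(ν(1-ν)) in the Löwner order. -/

import Mathlib

open Matrix ComplexOrder

/-- Real power of a matrix, defined via the spectral decomposition when the
matrix is Hermitian (and junk value `0` otherwise). -/
noncomputable def mpow {n : ℕ} (A : Matrix (Fin n) (Fin n) ℂ) (t : ℝ) :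
    Matrix (Fin n) (Fin n) ℂ :=
  if hA : A.IsHermitian then
    (hA.eigenvectorUnitary : Matrix (Fin n) (Fin n) ℂ) *
      Matrix.diagonal (fun i => ((hA.eigenvalues i ^ t : ℝ) : ℂ)) *
      (star hA.eigenvectorUnitary : Matrix (Fin n) (Fin n) ℂ)
  else 0

/-- The weighted matrix geometric mean `A #_s B = A^{1/2} (A^{-1/2} B A^{-1/2})^s A^{1/2}`,
where the parameter `s` may exceed `1`. -/
noncomputable def geoMean {n : ℕ} (A B : Matrix (Fin n) (Fin n) ℂ) (s : ℝ) :
    Matrix (Fin n) (Fin n) ℂ :=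
  mpow A (1/2) * mpow (mpow A (-(1/2)) * B * mpow A (-(1/2))) s * mpow A (1/2)

open Real in

private lemma geom_aux (a b : ℝ) (m : ℕ) (ha : 0 ≤ a) (hab : a ≤ b) (hb : b ≤ 1) :
    (1 - b^2) * (1 - a^(2*m)) ≤ (1 - a^2) * (1 - b^(2*m)) := by
  have h1 : ∀ c : ℝ, 1 - c^(2*m) = (1 - c^2) * ∑ j ∈ Finset.range m, (c^2)^j := by
    intro c
    have h := geom_sum_mul (c^2) m
    rw [pow_mul]
    nlinarith [h]
  have hsum : ∑ j ∈ Finset.range m, (a^2)^j ≤ ∑ j ∈ Finset.range m, (b^2)^j :=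
    Finset.sum_le_sum fun j _ => pow_le_pow_left₀ (sq_nonneg a) (by nlinarith) j
  have h2 : 0 ≤ 1 - b^2 := by nlinarith
  have h3 : 0 ≤ 1 - a^2 := by nlinarith
  rw [h1 a, h1 b]
  calc (1 - b^2) * ((1-a^2) * ∑ j ∈ Finset.range m, (a^2)^j)
      = (1-a^2)*(1-b^2) * ∑ j ∈ Finset.range m, (a^2)^j := by ring
    _ ≤ (1-a^2)*(1-b^2) * ∑ j ∈ Finset.range m, (b^2)^j :=
        mul_le_mul_of_nonneg_left hsum (mul_nonneg h3 h2)
    _ = (1 - a^2) * ((1-b^2) * ∑ j ∈ Finset.range m, (b^2)^j) := by ring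

private lemma key_cosh (θ s₁ s₂ : ℝ) (h0 : 0 ≤ s₁) (h12 : s₁ ≤ s₂) (h21 : s₂ ≤ 1) :
    (1 - s₂^2) * (Real.cosh θ - Real.cosh (s₁*θ)) ≤
      (1 - s₁^2) * (Real.cosh θ - Real.cosh (s₂*θ)) := by
  have H1 : HasSum (fun n : ℕ => (1-s₂^2) * (θ^(2*n)/((2*n).factorial : ℝ) - (s₁*θ)^(2*n)/((2*n).factorial : ℝ)))
      ((1 - s₂^2) * (Real.cosh θ - Real.cosh (s₁*θ))) :=
    ((Real.hasSum_cosh θ).sub (Real.hasSum_cosh (s₁*θ))).mul_left _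
  have H2 : HasSum (fun n : ℕ => (1-s₁^2) * (θ^(2*n)/((2*n).factorial : ℝ) - (s₂*θ)^(2*n)/((2*n).factorial : ℝ)))
      ((1 - s₁^2) * (Real.cosh θ - Real.cosh (s₂*θ))) :=
    ((Real.hasSum_cosh θ).sub (Real.hasSum_cosh (s₂*θ))).mul_left _
  refine hasSum_le (fun n => ?_) H1 H2
  have hfac : (0:ℝ) < ((2*n).factorial : ℝ) := by exact_mod_cast Nat.factorial_pos _
  have hθ : (0:ℝ) ≤ θ^(2*n) := by rw [pow_mul]; positivity
  have hg := geom_aux s₁ s₂ n h0 h12 h21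
  have e1 : ∀ s : ℝ, θ^(2*n)/((2*n).factorial : ℝ) - (s*θ)^(2*n)/((2*n).factorial : ℝ)
      = (1 - s^(2*n)) * (θ^(2*n)/((2*n).factorial : ℝ)) := by
    intro s; rw [mul_pow]; ring
  rw [e1, e1, ← mul_assoc, ← mul_assoc]
  exact mul_le_mul_of_nonneg_right (by nlinarith) (by positivity)

/-- The scalar function in the Heinz-type inequality. -/
noncomputable def Efun (x t : ℝ) : ℝ :=
  (t*(1-t))⁻¹ * (1 + x*x - (x^(2*t) + x^(2-2*t)))

private lemma Efun_symm (x t : ℝ) : Efun x (1-t) = Efun x t := by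
  unfold Efun
  rw [show 2-2*(1-t) = 2*t by ring, show 2*(1-t) = 2-2*t by ring]
  ring_nf

private lemma Efun_core {x : ℝ} (hx : 0 < x) {τ ν : ℝ} (hν0 : 0 < ν) (hτ1 : τ < 1)
    (hντ : ν ≤ τ) (hτ2 : τ ≤ 1/2) : Efun x τ ≤ Efun x ν := by
  set θ := Real.log x with hθ
  have hxe : x = Real.exp θ := (Real.exp_log hx).symm
  have hid : ∀ t : ℝ, 1 + x*x - (x^(2*t) + x^(2-2*t))
      = 2 * Real.exp θ * (Real.cosh θ - Real.cosh ((1-2*t)*θ)) := by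
    intro t
    rw [Real.rpow_def_of_pos hx, Real.rpow_def_of_pos hx, Real.cosh_eq, Real.cosh_eq, ← hθ]
    rw [show θ*(2*t) = θ*t + θ*t by ring, show θ*(2-2*t) = (θ+θ) - (θ*t+θ*t) by ring,
      show (1-2*t)*θ = θ - (θ*t+θ*t) by ring, show -(θ - (θ*t+θ*t)) = (θ*t+θ*t) - θ by ring]
    rw [Real.exp_add, Real.exp_sub, Real.exp_sub, Real.exp_sub, Real.exp_add, Real.exp_add, Real.exp_neg]
    have h1 : Real.exp θ ≠ 0 := (Real.exp_pos θ).ne'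
    have h2 : Real.exp (θ*t) ≠ 0 := (Real.exp_pos _).ne'
    rw [show x * x = Real.exp θ * Real.exp θ by rw [← hxe]]
    field_simp
    ring
  have hk := key_cosh θ (1-2*τ) (1-2*ν) (by linarith) (by linarith) (by linarith)
  have hτpos : 0 < τ*(1-τ) := by nlinarith
  have hνpos : 0 < ν*(1-ν) := by nlinarith
  unfold Efun
  rw [hid, hid, inv_mul_eq_div, inv_mul_eq_div, div_le_div_iff₀ hτpos hνpos]
  have hE := Real.exp_pos θ
  nlinarith [mul_le_mul_of_nonneg_left hk hE.le]

private lemma Efun_case1 {x : ℝ} (hx : 0 < x) {τ ν : ℝ} (hτ : τ ∈ Set.Ioo (0:ℝ) 1)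
    (hν : ν ∈ Set.Ioo (0:ℝ) 1) (h : ν ≤ min τ (1-τ)) : Efun x τ ≤ Efun x ν := by
  rcases le_or_gt τ (1/2) with h2 | h2
  · exact Efun_core hx hν.1 hτ.2 (h.trans (min_le_left _ _)) h2
  · rw [← Efun_symm x τ]
    exact Efun_core hx hν.1 (by linarith [hτ.1]) (h.trans (min_le_right _ _)) (by linarith)

lemma Efun_main {x : ℝ} (hx : 0 < x) {τ ν : ℝ} (hτ : τ ∈ Set.Ioo (0:ℝ) 1)
    (hν : ν ∈ Set.Ioo (0:ℝ) 1) (h : ν ≤ min τ (1 - τ) ∨ max τ (1 - τ) ≤ ν) :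
    Efun x τ ≤ Efun x ν := by
  rcases h with h | h
  · exact Efun_case1 hx hτ hν h
  · rw [← Efun_symm x ν]
    refine Efun_case1 hx hτ ⟨by linarith [hν.2], by linarith [hν.1]⟩ ?_
    exact le_min (by linarith [le_of_max_le_right h]) (by linarith [le_of_max_le_left h])

lemma mpow_eq {n : ℕ} {A : Matrix (Fin n) (Fin n) ℂ} (hA : A.IsHermitian) (t : ℝ) :
    mpow A t = (hA.eigenvectorUnitary : Matrix (Fin n) (Fin n) ℂ) *
      Matrix.diagonal (fun i => ((hA.eigenvalues i ^ t : ℝ) : ℂ)) *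
      (star hA.eigenvectorUnitary : Matrix (Fin n) (Fin n) ℂ) := dif_pos hA

section aux
variable {n : ℕ} {A : Matrix (Fin n) (Fin n) ℂ}

lemma conj_mul_conj (hA : A.IsHermitian) (d₁ d₂ : Fin n → ℂ) :
    ((hA.eigenvectorUnitary : Matrix (Fin n) (Fin n) ℂ) * Matrix.diagonal d₁ *
      (star hA.eigenvectorUnitary : Matrix (Fin n) (Fin n) ℂ)) *
    ((hA.eigenvectorUnitary : Matrix (Fin n) (Fin n) ℂ) * Matrix.diagonal d₂ *
      (star hA.eigenvectorUnitary : Matrix (Fin n) (Fin n) ℂ))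
    = (hA.eigenvectorUnitary : Matrix (Fin n) (Fin n) ℂ) * Matrix.diagonal (d₁ * d₂) *
      (star hA.eigenvectorUnitary : Matrix (Fin n) (Fin n) ℂ) := by
  have h : (star hA.eigenvectorUnitary : Matrix (Fin n) (Fin n) ℂ) *
      (hA.eigenvectorUnitary : Matrix (Fin n) (Fin n) ℂ) = 1 :=
    Matrix.mem_unitaryGroup_iff'.mp hA.eigenvectorUnitary.2
  calc _ = (hA.eigenvectorUnitary : Matrix (Fin n) (Fin n) ℂ) * Matrix.diagonal d₁ *
        ((star hA.eigenvectorUnitary : Matrix (Fin n) (Fin n) ℂ) *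
          (hA.eigenvectorUnitary : Matrix (Fin n) (Fin n) ℂ)) * (Matrix.diagonal d₂ *
        (star hA.eigenvectorUnitary : Matrix (Fin n) (Fin n) ℂ)) := by
        simp only [Matrix.mul_assoc]
    _ = _ := by
        rw [h, Matrix.mul_one, ← Matrix.mul_assoc,
          Matrix.mul_assoc _ (Matrix.diagonal d₁) (Matrix.diagonal d₂),
          Matrix.diagonal_mul_diagonal]
        rfl

lemma mpow_isHermitian (hA : A.IsHermitian) (t : ℝ) : (mpow A t).IsHermitian := by
  rw [mpow_eq hA, Matrix.star_eq_conjTranspose]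
  exact Matrix.isHermitian_mul_mul_conjTranspose _
    (Matrix.isHermitian_diagonal_of_self_adjoint _
      (by funext i; simp [Pi.star_apply, Complex.star_def, Complex.conj_ofReal]))

lemma mpow_mul_mpow (hA : A.PosDef) (s t : ℝ) :
    mpow A s * mpow A t = mpow A (s + t) := by
  rw [mpow_eq hA.1, mpow_eq hA.1, mpow_eq hA.1, conj_mul_conj hA.1]
  have hd : ((fun i => ((hA.1.eigenvalues i ^ s : ℝ) : ℂ)) *
      (fun i => ((hA.1.eigenvalues i ^ t : ℝ) : ℂ)))
      = fun i => ((hA.1.eigenvalues i ^ (s + t) : ℝ) : ℂ) := by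
    funext i
    show ((hA.1.eigenvalues i ^ s : ℝ) : ℂ) * ((hA.1.eigenvalues i ^ t : ℝ) : ℂ) = _
    rw [← Complex.ofReal_mul, ← Real.rpow_add (hA.eigenvalues_pos i)]
  rw [hd]

lemma mpow_zero (hA : A.IsHermitian) : mpow A 0 = 1 := by
  rw [mpow_eq hA]
  have : (fun i => ((hA.eigenvalues i ^ (0:ℝ) : ℝ) : ℂ)) = fun _ => 1 := by
    funext i; simp [Real.rpow_zero]
  rw [this, Matrix.diagonal_one, Matrix.mul_one]
  exact Matrix.mem_unitaryGroup_iff.mp hA.eigenvectorUnitary.2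

lemma mpow_one (hA : A.IsHermitian) : mpow A 1 = A := by
  rw [mpow_eq hA]
  have h : (fun i => ((hA.eigenvalues i ^ (1:ℝ) : ℝ) : ℂ)) = Complex.ofReal ∘ hA.eigenvalues := by
    funext i; simp [Real.rpow_one]
  rw [h]
  exact hA.spectral_theorem.symm

end aux


section conj
variable {n : ℕ}

lemma conj_add (U V X Y : Matrix (Fin n) (Fin n) ℂ) : U*X*V + U*Y*V = U*(X+Y)*V := by
  rw [Matrix.mul_add, Matrix.add_mul]

lemma conj_sub (U V X Y : Matrix (Fin n) (Fin n) ℂ) : U*X*V - U*Y*V = U*(X-Y)*V := by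
  rw [Matrix.mul_sub, Matrix.sub_mul]

lemma conj_smul (r : ℝ) (U V X : Matrix (Fin n) (Fin n) ℂ) : r • (U*X*V) = U*(r•X)*V := by
  rw [← smul_mul_assoc, ← mul_smul_comm]

end conj

theorem loewner_quadratic_heinz {n : ℕ} (A B : Matrix (Fin n) (Fin n) ℂ)
    (hA : A.PosDef) (hB : B.PosDef)
    (τ ν : ℝ) (hτ : τ ∈ Set.Ioo (0:ℝ) 1) (hν : ν ∈ Set.Ioo (0:ℝ) 1)
    (h : ν ≤ min τ (1 - τ) ∨ max τ (1 - τ) ≤ ν) :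
    ((ν * (1 - ν))⁻¹ • (A + B * A⁻¹ * B - (geoMean A B (2*ν) + geoMean A B (2 - 2*ν)))
      - (τ * (1 - τ))⁻¹ • (A + B * A⁻¹ * B - (geoMean A B (2*τ) + geoMean A B (2 - 2*τ)))
      ).PosSemidef := by

  have hAh := hA.1
  have hBh := hB.1
  set S := mpow A (1/2) with hSdef
  set T := mpow A (-(1/2)) with hTdef
  have hST : S * T = 1 := by
    rw [hSdef, hTdef, mpow_mul_mpow hA, show (1/2 + -(1/2) : ℝ) = 0 by norm_num,
      mpow_zero hAh]
  have hTS : T * S = 1 := by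
    rw [hSdef, hTdef, mpow_mul_mpow hA, show (-(1/2) + 1/2 : ℝ) = 0 by norm_num,
      mpow_zero hAh]
  have hSS : S * S = A := by
    rw [hSdef, mpow_mul_mpow hA, show (1/2 + 1/2 : ℝ) = 1 by norm_num, mpow_one hAh]
  have hSh : S.IsHermitian := mpow_isHermitian hAh _
  have hTh : T.IsHermitian := mpow_isHermitian hAh _
  have hAinv : A⁻¹ = T * T := by
    refine Matrix.inv_eq_right_inv ?_
    rw [← hSS, Matrix.mul_assoc, ← Matrix.mul_assoc S T T, hST, Matrix.one_mul, hST]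
  set C := T * B * T with hCdef
  have hCh : C.IsHermitian := by
    show (T*B*T)ᴴ = T*B*T
    rw [Matrix.conjTranspose_mul, Matrix.conjTranspose_mul, hTh.eq, hBh.eq,
      ← Matrix.mul_assoc]
  have hCpd : C.PosDef := by
    refine Matrix.PosDef.of_dotProduct_mulVec_pos hCh fun x hx => ?_
    have hTx : T *ᵥ x ≠ 0 := by
      intro h0
      apply hx
      have h1 := congrArg (fun v => S *ᵥ v) h0
      simpa [Matrix.mulVec_mulVec, hST] using h1
    have h2 := hB.dotProduct_mulVec_pos hTx
    simpa only [hCdef, Matrix.star_mulVec, Matrix.dotProduct_mulVec, Matrix.vecMul_vecMul,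
      hTh.eq, Matrix.mul_assoc] using h2
  set W := (hCh.eigenvectorUnitary : Matrix (Fin n) (Fin n) ℂ) with hWdef
  set μ := hCh.eigenvalues with hμdef
  have hμpos : ∀ i, 0 < μ i := fun i => hCpd.eigenvalues_pos i
  set f : Fin n → ℝ := fun i => Efun (μ i) ν - Efun (μ i) τ with hfdef
  have hC1 : (1 : Matrix (Fin n) (Fin n) ℂ)
      = W * Matrix.diagonal (fun _ => ((1:ℝ):ℂ)) * star W := by
    have h1 : W * star W = 1 := Matrix.mem_unitaryGroup_iff.mp hCh.eigenvectorUnitary.2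
    rw [show Matrix.diagonal (fun _ : Fin n => ((1:ℝ):ℂ)) = 1 by
        rw [← Matrix.diagonal_one]; norm_num,
      Matrix.mul_one, h1]
  have hCC : C * C = W * Matrix.diagonal (fun i => ((μ i * μ i : ℝ) : ℂ)) * star W := by
    conv_lhs => rw [hCh.spectral_theorem]
    simp only [Unitary.conjStarAlgAut_apply]
    rw [conj_mul_conj hCh]
    have hd : (RCLike.ofReal ∘ hCh.eigenvalues : Fin n → ℂ) * (RCLike.ofReal ∘ hCh.eigenvalues)
        = fun i => ((hCh.eigenvalues i * hCh.eigenvalues i : ℝ) : ℂ) := by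
      funext i
      simp only [Pi.mul_apply, Function.comp_apply, ← RCLike.ofReal_mul]
      rfl
    rw [hd]
  have hmp : ∀ s : ℝ, mpow C s
      = W * Matrix.diagonal (fun i => ((μ i ^ s : ℝ) : ℂ)) * star W := fun s => mpow_eq hCh s
  have hgeo : ∀ s : ℝ, geoMean A B s = S * mpow C s * S := fun s => rfl
  have hA' : A = S * (1 : Matrix (Fin n) (Fin n) ℂ) * S := by rw [Matrix.mul_one, hSS]
  have hBAB : B * A⁻¹ * B = S * (C*C) * S := by
    rw [hAinv, hCdef]
    simp only [Matrix.mul_assoc]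
    rw [hTS, Matrix.mul_one, ← Matrix.mul_assoc S T, hST, Matrix.one_mul]
  have hmain : ((ν * (1 - ν))⁻¹ • (A + B * A⁻¹ * B - (geoMean A B (2*ν) + geoMean A B (2 - 2*ν)))
      - (τ * (1 - τ))⁻¹ • (A + B * A⁻¹ * B - (geoMean A B (2*τ) + geoMean A B (2 - 2*τ))))
      = S * (W * Matrix.diagonal (fun i => ((f i : ℝ) : ℂ)) * star W) * S := by
    rw [hgeo, hgeo, hgeo, hgeo, hBAB, hA', hmp, hmp, hmp, hmp, hC1, hCC]
    simp only [conj_add, conj_sub, conj_smul]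
    congr 3
    simp only [Matrix.diagonal_add, Matrix.diagonal_sub, ← Matrix.diagonal_smul]
    congr 1
    funext i
    simp only [Pi.smul_apply, Pi.add_apply, Pi.sub_apply, Complex.real_smul, hfdef]
    unfold Efun
    push_cast
    ring
  rw [hmain]
  have hD : (Matrix.diagonal (fun i => ((f i : ℝ) : ℂ))).PosSemidef := by
    refine Matrix.posSemidef_diagonal_iff.mpr fun i => ?_
    rw [Complex.zero_le_real]
    exact sub_nonneg.mpr (Efun_main (hμpos i) hτ hν h)
  have h1 : (W * Matrix.diagonal (fun i => ((f i : ℝ) : ℂ)) * star W).PosSemidef := by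
    have := hD.mul_mul_conjTranspose_same W
    simpa [Matrix.star_eq_conjTranspose] using this
  have h2 := h1.mul_mul_conjTranspose_same S
  simpa [hSh.eq] using h2
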